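/- arXiv:2312.00007 — 2 statements merged into one kernel-verified Lean document; each statement's English description precedes it below -/
import Mathlib

section
/- Consider one step of the Kalman filter starting from an initial estimate x̂ ∈ ℝⁿ and covariance P ∈ ℝ^{n×n} (symmetric), with model matrix M ∈ ℝ^{n×n}, control vector b ∈ ℝⁿ, model-error covariance Q (block diagonal Q = diag(Q1,Q2)), observation matrix H = [H1 H2] ∈ ℝ^{m×n}, observation y ∈ ℝᵐ, and observation-error covariance R ∈ ℝ^{m×m}, assuming H (M P Mᵀ + Q) Hᵀ + R is invertible. Let x̂⁺ denote the updated KF estimate obtained by the predictor step x⁺ = M x̂ + b, P⁺ = M P Mᵀ + Q, gain K = P⁺ Hᵀ (H P⁺ Hᵀ + R)⁻¹, corrector x̂⁺ = x⁺ + K (y − H x⁺). Let (x̂1⁺, x̂2⁺) denote the DD-KF estimates computed by the local predictor/corrector formulas using block restrictions of M, P, Q, H to index sets I1 = {1,...,n1}, I2 = {n1+1,...,n} (no overlap, s=0), with cross blocks P12, P21 initialized as the corresponding blocks of P and boundary terms b1 = M12 x̂|_{I2}, b2 = M21 x̂|_{I1}. Then x̂1⁺ = x̂⁺|_{I1} and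 x̂2⁺ = x̂⁺|_{I2}. -/
open Matrix

/-- One-step DD-KF consistency (Theorem 1, non-overlapping case):
the local DD-KF estimates equal the restrictions of the global KF estimate. -/
theorem ddkf_one_step_consistency
    (m n₁ n₂ : Type*) [Fintype m] [Fintype n₁] [Fintype n₂]
    [DecidableEq m] [DecidableEq n₁] [DecidableEq n₂]
    (M1 : Matrix n₁ n₁ ℝ) (M12 : Matrix n₁ n₂ ℝ)
    (M21 : Matrix n₂ n₁ ℝ) (M2 : Matrix n₂ n₂ ℝ)
    (P1 : Matrix n₁ n₁ ℝ) (P12 : Matrix n₁ n₂ ℝ)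
    (P21 : Matrix n₂ n₁ ℝ) (P2 : Matrix n₂ n₂ ℝ)
    (Q1 : Matrix n₁ n₁ ℝ) (Q2 : Matrix n₂ n₂ ℝ)
    (H1 : Matrix m n₁ ℝ) (H2 : Matrix m n₂ ℝ)
    (R : Matrix m m ℝ)
    (xhat : (n₁ ⊕ n₂) → ℝ) (b : (n₁ ⊕ n₂) → ℝ) (y : m → ℝ)
    (hPsym : (Matrix.fromBlocks P1 P12 P21 P2).IsHermitian)
    (hS : IsUnit (Matrix.fromCols H1 H2 *
        (Matrix.fromBlocks M1 M12 M21 M2 * Matrix.fromBlocks P1 P12 P21 P2 *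
          (Matrix.fromBlocks M1 M12 M21 M2)ᵀ + Matrix.fromBlocks Q1 0 0 Q2) *
        (Matrix.fromCols H1 H2)ᵀ + R)) :
    -- global KF step
    let M := Matrix.fromBlocks M1 M12 M21 M2
    let P := Matrix.fromBlocks P1 P12 P21 P2
    let Q := Matrix.fromBlocks Q1 0 0 Q2
    let H := Matrix.fromCols H1 H2
    let xp := M.mulVec xhat + b
    let Pp := M * P * Mᵀ + Q
    let K := Pp * Hᵀ * (H * Pp * Hᵀ + R)⁻¹
    let xhatPlus := xp + K.mulVec (y - H.mulVec xp)
    -- local DD-KF step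
    let xhat1 := xhat ∘ Sum.inl
    let xhat2 := xhat ∘ Sum.inr
    let b1 := M12.mulVec xhat2
    let b2 := M21.mulVec xhat1
    let x1p := M1.mulVec xhat1 + (b ∘ Sum.inl) + b1
    let x2p := M2.mulVec xhat2 + (b ∘ Sum.inr) + b2
    let P1p := M1 * P1 * M1ᵀ + (M12 * P21 * M1ᵀ + M1 * P12 * M12ᵀ + M12 * P2 * M12ᵀ) + Q1
    let P2p := M2 * P2 * M2ᵀ + (M21 * P12 * M2ᵀ + M2 * P21 * M21ᵀ + M21 * P1 * M21ᵀ) + Q2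
    let P12p := M1 * P12 * M2ᵀ + (M1 * P1 * M21ᵀ + M12 * P21 * M21ᵀ + M12 * P2 * M2ᵀ)
    let P21p := M2 * P21 * M1ᵀ + (M21 * P1 * M1ᵀ + M21 * P12 * M12ᵀ + M2 * P2 * M12ᵀ)
    let F := (H1 * P1p * H1ᵀ + H2 * P2p * H2ᵀ + H2 * P21p * H1ᵀ + H1 * P12p * H2ᵀ + R)⁻¹
    let K1 := (P1p * H1ᵀ + P12p * H2ᵀ) * F
    let K2 := (P2p * H2ᵀ + P21p * H1ᵀ) * F
    let xhat1Plus := x1p + K1.mulVec (y - (H1.mulVec x1p + H2.mulVec x2p))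
    let xhat2Plus := x2p + K2.mulVec (y - (H1.mulVec x1p + H2.mulVec x2p))
    xhat1Plus = xhatPlus ∘ Sum.inl ∧ xhat2Plus = xhatPlus ∘ Sum.inr := by
  intro M P Q H xp Pp K xhatPlus xhat1 xhat2 b1 b2 x1p x2p P1p P2p P12p P21p F K1 K2
    xhat1Plus xhat2Plus
  have hMT : Mᵀ = Matrix.fromBlocks M1ᵀ M21ᵀ M12ᵀ M2ᵀ := Matrix.fromBlocks_transpose _ _ _ _
  have hHT : Hᵀ = Matrix.fromRows H1ᵀ H2ᵀ := Matrix.transpose_fromCols _ _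
  have hPp : Pp = Matrix.fromBlocks P1p P12p P21p P2p := by
    show M * P * Mᵀ + Q = _
    rw [hMT]
    show Matrix.fromBlocks M1 M12 M21 M2 * Matrix.fromBlocks P1 P12 P21 P2 *
        Matrix.fromBlocks M1ᵀ M21ᵀ M12ᵀ M2ᵀ + Matrix.fromBlocks Q1 0 0 Q2 = _
    rw [Matrix.fromBlocks_multiply, Matrix.fromBlocks_multiply, Matrix.fromBlocks_add]
    refine Matrix.fromBlocks_inj.mpr ⟨?_, ?_, ?_, ?_⟩ <;>
      simp only [Matrix.add_mul, add_zero, P1p, P2p, P12p, P21p] <;> abel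
  have hxp : xp = Sum.elim x1p x2p := by
    show M *ᵥ xhat + b = _
    show Matrix.fromBlocks M1 M12 M21 M2 *ᵥ xhat + b = _
    rw [Matrix.fromBlocks_mulVec]
    funext i
    cases i with
    | inl i => show _ + _ + b (Sum.inl i) = x1p i; simp [x1p, b1]; ring
    | inr i => show _ + _ + b (Sum.inr i) = x2p i; simp [x2p, b2]; ring
  have hK : K = Matrix.fromRows K1 K2 := by
    show Pp * Hᵀ * (H * Pp * Hᵀ + R)⁻¹ = _
    have hF : H * Pp * Hᵀ + R =
        H1 * P1p * H1ᵀ + H2 * P2p * H2ᵀ + H2 * P21p * H1ᵀ + H1 * P12p * H2ᵀ + R := by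
      rw [hPp, hHT]
      show Matrix.fromCols H1 H2 * _ * _ + R = _
      rw [Matrix.fromCols_mul_fromBlocks, Matrix.fromCols_mul_fromRows]
      rw [Matrix.add_mul, Matrix.add_mul]
      abel
    rw [hF, hPp, hHT, Matrix.fromBlocks_mul_fromRows, Matrix.fromRows_mul]
    refine (Matrix.fromRows_ext_iff _ _ _ _).mpr ⟨rfl, ?_⟩
    show (P21p * H1ᵀ + P2p * H2ᵀ) * F = K2
    rw [add_comm (P21p * H1ᵀ)]
  have hHxp : H *ᵥ xp = H1 *ᵥ x1p + H2 *ᵥ x2p := by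
    rw [hxp]
    exact Matrix.fromCols_mulVec_sumElim _ _ _ _
  have hfin : xhatPlus = Sum.elim (x1p + K1 *ᵥ (y - (H1 *ᵥ x1p + H2 *ᵥ x2p)))
      (x2p + K2 *ᵥ (y - (H1 *ᵥ x1p + H2 *ᵥ x2p))) := by
    show xp + K *ᵥ (y - H *ᵥ xp) = _
    rw [hHxp, hK, hxp, Matrix.fromRows_mulVec]
    funext i; cases i <;> simp
  constructor <;> (rw [hfin]; funext i; rfl)
end

section
/- Under the DD-KF consistency setting above (single step, two non-overlapping subdomains), the DD-KF gains satisfy K1 = K|_{I1} and K2 = K|_{I2}, where K = P⁺ Hᵀ (H P⁺ Hᵀ + R)⁻¹ is the global Kalman gain and K|_{Ii} denotes the rows of K indexed by Ii. -/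
open Matrix

/-- DD-KF gains equal the row restrictions of the global Kalman gain. -/
theorem ddkf_gains_equal_global_gain_restrictions
    (m n₁ n₂ : Type*) [Fintype m] [Fintype n₁] [Fintype n₂]
    [DecidableEq m] [DecidableEq n₁] [DecidableEq n₂]
    (M1 : Matrix n₁ n₁ ℝ) (M12 : Matrix n₁ n₂ ℝ)
    (M21 : Matrix n₂ n₁ ℝ) (M2 : Matrix n₂ n₂ ℝ)
    (P1 : Matrix n₁ n₁ ℝ) (P12 : Matrix n₁ n₂ ℝ)
    (P21 : Matrix n₂ n₁ ℝ) (P2 : Matrix n₂ n₂ ℝ)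
    (Q1 : Matrix n₁ n₁ ℝ) (Q2 : Matrix n₂ n₂ ℝ)
    (H1 : Matrix m n₁ ℝ) (H2 : Matrix m n₂ ℝ)
    (R : Matrix m m ℝ)
    (hPsym : (Matrix.fromBlocks P1 P12 P21 P2).IsHermitian)
    (hS : IsUnit (Matrix.fromCols H1 H2 *
        (Matrix.fromBlocks M1 M12 M21 M2 * Matrix.fromBlocks P1 P12 P21 P2 *
          (Matrix.fromBlocks M1 M12 M21 M2)ᵀ + Matrix.fromBlocks Q1 0 0 Q2) *
        (Matrix.fromCols H1 H2)ᵀ + R)) :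
    let M := Matrix.fromBlocks M1 M12 M21 M2
    let P := Matrix.fromBlocks P1 P12 P21 P2
    let Q := Matrix.fromBlocks Q1 0 0 Q2
    let H := Matrix.fromCols H1 H2
    let Pp := M * P * Mᵀ + Q
    let K := Pp * Hᵀ * (H * Pp * Hᵀ + R)⁻¹
    let P1p := M1 * P1 * M1ᵀ + (M12 * P21 * M1ᵀ + M1 * P12 * M12ᵀ + M12 * P2 * M12ᵀ) + Q1
    let P2p := M2 * P2 * M2ᵀ + (M21 * P12 * M2ᵀ + M2 * P21 * M21ᵀ + M21 * P1 * M21ᵀ) + Q2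
    let P12p := M1 * P12 * M2ᵀ + (M1 * P1 * M21ᵀ + M12 * P21 * M21ᵀ + M12 * P2 * M2ᵀ)
    let P21p := M2 * P21 * M1ᵀ + (M21 * P1 * M1ᵀ + M21 * P12 * M12ᵀ + M2 * P2 * M12ᵀ)
    let F := (H1 * P1p * H1ᵀ + H2 * P2p * H2ᵀ + H2 * P21p * H1ᵀ + H1 * P12p * H2ᵀ + R)⁻¹
    let K1 := (P1p * H1ᵀ + P12p * H2ᵀ) * F
    let K2 := (P2p * H2ᵀ + P21p * H1ᵀ) * F
    K1 = K.submatrix Sum.inl id ∧ K2 = K.submatrix Sum.inr id := by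
  intro M P Q H Pp K P1p P2p P12p P21p F K1 K2
  have hPp : Pp = Matrix.fromBlocks P1p P12p P21p P2p := by
    show M * P * Mᵀ + Q = _
    simp only [M, P, Q, Matrix.fromBlocks_transpose, Matrix.fromBlocks_multiply,
      Matrix.fromBlocks_add, P1p, P2p, P12p, P21p]
    congr 1 <;> · simp only [Matrix.add_mul, Matrix.mul_add, Matrix.mul_assoc]; abel
  have hHt : Hᵀ = Matrix.fromRows H1ᵀ H2ᵀ := Matrix.transpose_fromCols H1 H2
  have hPpHt : Pp * Hᵀ = Matrix.fromRows (P1p * H1ᵀ + P12p * H2ᵀ) (P21p * H1ᵀ + P2p * H2ᵀ) := by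
    rw [hPp, hHt, Matrix.fromBlocks_mul_fromRows]
  have hS' : H * Pp * Hᵀ + R
      = H1 * P1p * H1ᵀ + H2 * P2p * H2ᵀ + H2 * P21p * H1ᵀ + H1 * P12p * H2ᵀ + R := by
    rw [Matrix.mul_assoc, hPpHt, Matrix.fromCols_mul_fromRows]
    simp only [Matrix.mul_add, ← Matrix.mul_assoc]
    abel
  have hK : K = Matrix.fromRows K1 K2 := by
    show Pp * Hᵀ * (H * Pp * Hᵀ + R)⁻¹ = _
    rw [hPpHt, hS', Matrix.fromRows_mul]
    unfold K1 K2 F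
    rw [add_comm (P21p * H1ᵀ)]
  constructor <;> (rw [hK]; ext i j; simp [Matrix.fromRows_apply_inl, Matrix.fromRows_apply_inr])
end
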